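/- Let A be a finite-dimensional k-algebra and t : A → k a non-degenerate symmetric linear form (the pairing (x,y) ↦ t(xy) is non-degenerate). Then for every finitely generated projective left A-module P and every left A-module M, the pairing Hom_A(M,P) × Hom_A(P,M) → k given by (f,g) ↦ t_P(f ∘ g) is non-degenerate, where t_P is the canonical extension of t to traces on projective modules. -/

import Mathlib

/-- Theorem 2.6 (3): if `t` is a non-degenerate symmetric linear form on a finite-dimensional
algebra `A`, then for every finitely generated projective `A`-module `P` and every `A`-module
`M` the pairing `(f, g) ↦ t_P (f ∘ g)` on `Hom_A(M,P) × Hom_A(P,M)` is non-degenerate, where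
`t_P (h) = ∑ i, t ((b i ∘ h ∘ a i) 1)` for any decomposition `id_P = ∑ i, a i ∘ b i` of the
identity through the regular module. -/
theorem stmt5 (k A P M : Type) [Field k] [Ring A] [Algebra k A] [FiniteDimensional k A]
    [AddCommGroup P] [Module A P] [Module.Finite A P] [Module.Projective A P]
    [AddCommGroup M] [Module A M]
    (t : A →ₗ[k] k) (hsym : ∀ x y : A, t (x * y) = t (y * x))
    (hnd : ∀ y : A, (∀ x : A, t (x * y) = 0) → y = 0)
    (n : ℕ) (a : Fin n → (A →ₗ[A] P)) (b : Fin n → (P →ₗ[A] A))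
    (ha : ∑ i, (a i) ∘ₗ (b i) = (LinearMap.id : P →ₗ[A] P)) :
    (∀ f : M →ₗ[A] P,
        (∀ g : P →ₗ[A] M, ∑ i, t ((b i ∘ₗ (f ∘ₗ g) ∘ₗ a i) 1) = 0) → f = 0) ∧
    (∀ g : P →ₗ[A] M,
        (∀ f : M →ₗ[A] P, ∑ i, t ((b i ∘ₗ (f ∘ₗ g) ∘ₗ a i) 1) = 0) → g = 0) := by
  classical
  set p : Fin n → P := fun i => a i 1 with hp
  have hap : ∀ i (x : A), a i x = x • p i := by
    intro i x
    have : a i (x • (1 : A)) = x • a i 1 := map_smul (a i) x 1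
    simpa [smul_eq_mul] using this
  -- identity decomposition, pointwise
  have hid : ∀ q : P, ∑ i, (b i q) • p i = q := by
    intro q
    have := LinearMap.congr_fun ha q
    simpa [LinearMap.sum_apply, LinearMap.comp_apply, hap] using this
  -- injectivity of pairing against t
  have tinj : ∀ u v : A, (∀ x : A, t (x * u) = t (x * v)) → u = v := by
    intro u v h
    have : u - v = 0 := by
      apply hnd
      intro x
      rw [mul_sub, map_sub, h x, sub_self]
    exact sub_eq_zero.mp this
  constructor
  · -- f perpendicular to all g implies f = 0
    intro f hf
    by_contra hf0
    obtain ⟨m₀, hm₀⟩ : ∃ m₀ : M, f m₀ ≠ 0 := by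
      by_contra h
      push_neg at h
      exact hf0 (LinearMap.ext fun m => by rw [h m, LinearMap.zero_apply])
    obtain ⟨j, hj⟩ : ∃ j, b j (f m₀) ≠ 0 := by
      by_contra h
      push_neg at h
      apply hm₀
      have := hid (f m₀)
      simp only [h, zero_smul, Finset.sum_const_zero] at this
      exact this.symm
    obtain ⟨x, hx⟩ : ∃ x : A, t (x * b j (f m₀)) ≠ 0 := by
      by_contra h
      push_neg at h
      exact hj (hnd _ h)
    set m' : M := x • m₀ with hm'
    set g : P →ₗ[A] M := (LinearMap.toSpanSingleton A M m') ∘ₗ b j with hg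
    have key : ∑ i, t ((b i ∘ₗ (f ∘ₗ g) ∘ₗ a i) 1) = t (x * b j (f m₀)) := by
      have step : ∀ i, t ((b i ∘ₗ (f ∘ₗ g) ∘ₗ a i) 1)
          = t (b j ((b i (f m')) • p i)) := by
        intro i
        have e1 : (b i ∘ₗ (f ∘ₗ g) ∘ₗ a i) 1 = b i (f ((b j (p i)) • m')) := by
          simp [LinearMap.comp_apply, hg, LinearMap.toSpanSingleton_apply, hp]
        rw [e1, map_smul f, map_smul (b i), smul_eq_mul, hsym,
          map_smul (b j), smul_eq_mul]
      calc ∑ i, t ((b i ∘ₗ (f ∘ₗ g) ∘ₗ a i) 1)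
          = ∑ i, t (b j ((b i (f m')) • p i)) := Finset.sum_congr rfl fun i _ => step i
        _ = t (b j (∑ i, (b i (f m')) • p i)) := by rw [← map_sum, ← map_sum]
        _ = t (b j (f m')) := by rw [hid (f m')]
        _ = t (x * b j (f m₀)) := by rw [hm', map_smul f, map_smul (b j), smul_eq_mul]
    exact hx (key ▸ hf g)
  · -- g perpendicular to all f implies g = 0
    intro g hg
    by_contra hg0
    obtain ⟨q, hq⟩ : ∃ q : P, g q ≠ 0 := by
      by_contra h
      push_neg at h
      exact hg0 (LinearMap.ext fun q => by rw [h q, LinearMap.zero_apply])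
    obtain ⟨j, hj⟩ : ∃ j, g (p j) ≠ 0 := by
      by_contra h
      push_neg at h
      apply hq
      have := congrArg g (hid q).symm
      rw [map_sum] at this
      simp only [map_smul, h, smul_zero, Finset.sum_const_zero] at this
      exact this
    -- k-module structure on M
    letI : Module k M := Module.compHom M (algebraMap k A)
    have hsmul : ∀ (c : k) (m : M), c • m = (algebraMap k A c) • m := fun _ _ => rfl
    -- a functional not vanishing on g (p j)
    obtain ⟨lam, hlam⟩ : ∃ lam : Module.Dual k M, lam (g (p j)) ≠ 0 := by
      by_contra h
      push_neg at h
      exact hj ((Module.forall_dual_apply_eq_zero_iff k (g (p j))).mp h)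
    -- the map Φ : A → Dual A, u ↦ (x ↦ t (x * u)), is bijective
    set Φ : A →ₗ[k] Module.Dual k A :=
      { toFun := fun u => t ∘ₗ LinearMap.mulRight k u
        map_add' := by
          intro u v
          ext x
          simp [mul_add]
        map_smul' := by
          intro c u
          ext x
          simp [mul_smul_comm] } with hΦ
    have Φinj : Function.Injective Φ := by
      intro u v huv
      apply tinj
      intro x
      exact LinearMap.congr_fun huv x
    have Φsurj : Function.Surjective Φ :=
      (LinearMap.injective_iff_surjective_of_finrank_eq_finrank
        Subspace.dual_finrank_eq.symm).mp Φinj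
    -- the functional x ↦ lam (x • m), for each m
    set δ : M → Module.Dual k A := fun m =>
      { toFun := fun x => lam (x • m)
        map_add' := by
          intro x y
          show lam ((x + y) • m) = lam (x • m) + lam (y • m)
          rw [add_smul, map_add]
        map_smul' := by
          intro c x
          show lam ((c • x) • m) = c • lam (x • m)
          have h1 : (c • x) • m = c • (x • m) := by
            rw [hsmul, Algebra.smul_def, mul_smul]
          rw [h1, map_smul] } with hδ
    choose F hFΦ using fun m => Φsurj (δ m)
    have hF : ∀ (m : M) (x : A), t (x * F m) = lam (x • m) := by
      intro m x
      exact LinearMap.congr_fun (hFΦ m) x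
    -- F is A-linear
    have Fadd : ∀ m m' : M, F (m + m') = F m + F m' := by
      intro m m'
      apply tinj
      intro x
      rw [hF, smul_add, map_add, ← hF, ← hF, mul_add, map_add]
    have Fsmul : ∀ (y : A) (m : M), F (y • m) = y * F m := by
      intro y m
      apply tinj
      intro x
      rw [hF, ← mul_smul, ← hF, mul_assoc]
    set Fhom : M →ₗ[A] A :=
      { toFun := F
        map_add' := Fadd
        map_smul' := fun y m => by simpa [smul_eq_mul] using Fsmul y m } with hFhom
    set f : M →ₗ[A] P := a j ∘ₗ Fhom with hfdef
    have key : ∑ i, t ((b i ∘ₗ (f ∘ₗ g) ∘ₗ a i) 1) = lam (g (p j)) := by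
      have step : ∀ i, t ((b i ∘ₗ (f ∘ₗ g) ∘ₗ a i) 1)
          = lam (g ((b i (p j)) • p i)) := by
        intro i
        have e1 : (b i ∘ₗ (f ∘ₗ g) ∘ₗ a i) 1 = b i ((F (g (p i))) • p j) := by
          simp [LinearMap.comp_apply, hfdef, hFhom, hap]
        rw [e1, map_smul (b i), smul_eq_mul, hsym, hF, map_smul g]
      calc ∑ i, t ((b i ∘ₗ (f ∘ₗ g) ∘ₗ a i) 1)
          = ∑ i, lam (g ((b i (p j)) • p i)) := Finset.sum_congr rfl fun i _ => step i
        _ = lam (g (∑ i, (b i (p j)) • p i)) := by rw [← map_sum, ← map_sum]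
        _ = lam (g (p j)) := by rw [hid (p j)]
    exact hlam (key ▸ hg f)
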